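/- arXiv:2401.00597 — 4 statements merged into one kernel-verified Lean document; each statement's English description precedes it below -/
import Mathlib

section
/- Let K be a field of characteristic 0, R = K[x_1,…,x_n] the polynomial ring, I ⊆ R an ideal and m ⊆ R a maximal ideal. Then the contraction to R of the extension of I to the localization R_m equals the intersection ⋂_{d ≥ 1} (I + m^d). That is, a polynomial f ∈ R lies in I·R_m ∩ R if and only if f ∈ I + m^d for every d ≥ 1. -/
set_option synthInstance.maxHeartbeats 1000000
set_option maxHeartbeats 1000000

open MvPolynomial

/-- The contraction to `R = K[x_1, …, x_n]` of the extension of an ideal `I` to the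
localization `R_m` at a maximal ideal `m` equals `⋂_{d ≥ 1} (I + m^d)`. -/
theorem contraction_of_localization_eq_iInter_add_pow
    {K : Type*} [Field K] [CharZero K] {n : ℕ}
    (I m : Ideal (MvPolynomial (Fin n) K)) [m.IsMaximal]
    (f : MvPolynomial (Fin n) K) :
    f ∈ Ideal.comap (algebraMap (MvPolynomial (Fin n) K) (Localization.AtPrime m))
        (Ideal.map (algebraMap (MvPolynomial (Fin n) K) (Localization.AtPrime m)) I) ↔
      ∀ d : ℕ, 1 ≤ d → f ∈ I + m ^ d := by
  constructor
  · intro hf d _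
    rw [Ideal.mem_comap, IsLocalization.mem_map_algebraMap_iff m.primeCompl] at hf
    obtain ⟨⟨a, s⟩, ha⟩ := hf
    rw [← map_mul, IsLocalization.eq_iff_exists m.primeCompl] at ha
    obtain ⟨c, hc⟩ := ha
    set t : MvPolynomial (Fin n) K := (c : MvPolynomial (Fin n) K) * (s : MvPolynomial (Fin n) K)
      with ht
    have htI : t * f ∈ I := by
      have heq : t * f = (c : MvPolynomial (Fin n) K) * (f * (s : MvPolynomial (Fin n) K)) := by
        ring
      rw [heq, hc]
      exact I.mul_mem_left _ a.2
    have htm : t ∉ m := fun hmem => by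
      rcases (‹m.IsMaximal›.isPrime.mem_or_mem hmem) with h' | h'
      · exact c.2 h'
      · exact s.2 h'
    have hsup : Ideal.span {t} ⊔ m = ⊤ := by
      by_contra hne
      have : m = Ideal.span {t} ⊔ m := ‹m.IsMaximal›.eq_of_le hne le_sup_right
      exact htm (this ▸ (le_sup_left (α := Ideal (MvPolynomial (Fin n) K)))
        (Ideal.subset_span rfl))
    have hsupd : Ideal.span {t} ⊔ m ^ d = ⊤ := Ideal.sup_pow_eq_top (by rwa [sup_comm] at hsup ⊢)
    have hmd : m ^ d ≤ I + m ^ d := by rw [Ideal.add_eq_sup]; exact le_sup_right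
    have hsupJ : Ideal.span {t} ⊔ (I + m ^ d) = ⊤ := by
      rw [eq_top_iff, ← hsupd]
      exact sup_le_sup_left hmd _
    have h1 : (1 : MvPolynomial (Fin n) K) ∈ Ideal.span {t} ⊔ (I + m ^ d) :=
      hsupJ ▸ Submodule.mem_top
    rcases Submodule.mem_sup.mp h1 with ⟨y, hy, z, hz, hyz⟩
    rcases Ideal.mem_span_singleton'.mp hy with ⟨u, hu⟩
    have hIle : I ≤ I + m ^ d := by rw [Ideal.add_eq_sup]; exact le_sup_left
    have hfe : f = (t * f) * u + z * f := by
      calc f = 1 * f := (one_mul f).symm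
        _ = (y + z) * f := by rw [hyz]
        _ = (t * f) * u + z * f := by rw [← hu]; ring
    rw [hfe]
    exact Ideal.add_mem _ (hIle (I.mul_mem_right u htI)) ((I + m ^ d).mul_mem_right f hz)
  · intro h
    have hS : IsNoetherianRing (Localization.AtPrime m) :=
      IsLocalization.isNoetherianRing m.primeCompl _ inferInstance
    set J := Ideal.map (algebraMap (MvPolynomial (Fin n) K) (Localization.AtPrime m)) I
      with hJdef
    by_cases hJ : J = ⊤
    · simp [Ideal.mem_comap, hJ]
    have hnt : Nontrivial (Localization.AtPrime m ⧸ J) := Ideal.Quotient.nontrivial_iff.mpr hJ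
    have hloc : IsLocalRing (Localization.AtPrime m ⧸ J) :=
      IsLocalRing.of_surjective' (Ideal.Quotient.mk J) Ideal.Quotient.mk_surjective
    have hJM : J ≤ IsLocalRing.maximalIdeal (Localization.AtPrime m) :=
      IsLocalRing.le_maximalIdeal hJ
    have hM'ne : Ideal.map (Ideal.Quotient.mk J)
        (IsLocalRing.maximalIdeal (Localization.AtPrime m)) ≠ ⊤ := by
      intro htop
      have hcm : Ideal.comap (Ideal.Quotient.mk J) (Ideal.map (Ideal.Quotient.mk J)
          (IsLocalRing.maximalIdeal (Localization.AtPrime m))) = ⊤ := by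
        rw [htop, Ideal.comap_top]
      rw [Ideal.comap_map_of_surjective _ Ideal.Quotient.mk_surjective] at hcm
      have hker : Ideal.comap (Ideal.Quotient.mk J) ⊥ = J := by
        rw [← RingHom.ker_eq_comap_bot, Ideal.mk_ker]
      rw [hker, sup_eq_left.mpr hJM] at hcm
      exact (IsLocalRing.maximalIdeal.isMaximal (Localization.AtPrime m)).ne_top hcm
    have hmem : ∀ d : ℕ, (Ideal.Quotient.mk J)
        (algebraMap (MvPolynomial (Fin n) K) (Localization.AtPrime m) f) ∈
        (Ideal.map (Ideal.Quotient.mk J)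
          (IsLocalRing.maximalIdeal (Localization.AtPrime m))) ^ d := by
      intro d
      rcases Nat.eq_zero_or_pos d with hd | hd
      · subst hd; rw [Submodule.pow_zero, Ideal.one_eq_top]; exact Submodule.mem_top
      have hfd : f ∈ I + m ^ d := h d hd
      have h1 : algebraMap (MvPolynomial (Fin n) K) (Localization.AtPrime m) f ∈
          J ⊔ (IsLocalRing.maximalIdeal (Localization.AtPrime m)) ^ d := by
        have h0 := Ideal.mem_map_of_mem
          (algebraMap (MvPolynomial (Fin n) K) (Localization.AtPrime m)) hfd
        rwa [Ideal.add_eq_sup, Ideal.map_sup, Ideal.map_pow,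
          Localization.AtPrime.map_eq_maximalIdeal] at h0
      have h2 := Ideal.mem_map_of_mem (Ideal.Quotient.mk J) h1
      rw [Ideal.map_sup, Ideal.map_quotient_self, bot_sup_eq] at h2
      exact (Ideal.map_pow (R := Localization.AtPrime m) (S := Localization.AtPrime m ⧸ J) (Ideal.Quotient.mk J) _ d) ▸ h2
    have hbot := Ideal.iInf_pow_eq_bot_of_isLocalRing (R := Localization.AtPrime m ⧸ J) _ hM'ne
    have hz : (Ideal.Quotient.mk J)
        (algebraMap (MvPolynomial (Fin n) K) (Localization.AtPrime m) f) ∈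
        (⊥ : Ideal (Localization.AtPrime m ⧸ J)) := hbot ▸ Ideal.mem_iInf.mpr hmem
    rw [Ideal.mem_bot] at hz
    exact Ideal.mem_comap.mpr (Ideal.Quotient.eq_zero_iff_mem.mp hz)
end

section
/- Let K be a field of characteristic 0, R = K[x_1,…,x_n], m ⊆ R a maximal ideal and I ⊆ R an m-primary ideal. Then the local dual space D_m[I] is a finite-dimensional vector space over the residue field R/m. -/
set_option synthInstance.maxHeartbeats 1000000
set_option maxHeartbeats 1000000

open MvPolynomial

/-- The iterated partial derivative operator `∂^α` on `K[x_1, …, x_n]`. -/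
noncomputable def pdOp {K : Type*} [CommRing K] {n : ℕ} (α : Fin n →₀ ℕ) :
    Module.End K (MvPolynomial (Fin n) K) :=
  ((List.finRange n).map fun i =>
    ((pderiv i).toLinearMap : Module.End K (MvPolynomial (Fin n) K)) ^ (α i)).prod

section Deriv
variable {K : Type*} [CommRing K] {n : ℕ}

lemma nat_desc_aux (b k : ℕ) : b * (b-1).descFactorial k = b.descFactorial (k+1) := by
  cases b with
  | zero => simp
  | succ m => rw [Nat.succ_sub_one, Nat.succ_descFactorial_succ]

lemma pderiv_pow_monomial (i : Fin n) (k : ℕ) (β : Fin n →₀ ℕ) (a : K) :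
    (((pderiv i).toLinearMap : Module.End K (MvPolynomial (Fin n) K)) ^ k) (monomial β a)
      = monomial (β - Finsupp.single i k) (a * ((β i).descFactorial k : K)) := by
  induction k generalizing β a with
  | zero => simp
  | succ k ih =>
    rw [pow_succ, Module.End.mul_apply]
    rw [show ((pderiv i).toLinearMap : Module.End K (MvPolynomial (Fin n) K)) (monomial β a)
        = monomial (β - Finsupp.single i 1) (a * (β i : K)) from pderiv_monomial]
    rw [ih]
    congr 1
    · rw [← tsub_add_eq_tsub_tsub]
      congr 1
      rw [← Finsupp.single_add, add_comm]
    · rw [Finsupp.tsub_apply, Finsupp.single_apply, if_pos rfl]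
      rw [mul_assoc, ← Nat.cast_mul, nat_desc_aux]

lemma list_pd_monomial (γ β : Fin n →₀ ℕ) (a : K) (l : List (Fin n)) (hl : l.Nodup) :
    ((l.map fun i =>
      ((pderiv i).toLinearMap : Module.End K (MvPolynomial (Fin n) K)) ^ (γ i)).prod)
      (monomial β a)
    = monomial (β - (l.map fun i => Finsupp.single i (γ i)).sum)
        (a * (l.map fun i => ((β i).descFactorial (γ i) : K)).prod) := by
  induction l generalizing β a with
  | nil => simp
  | cons i t ih =>
    have hit : i ∉ t := (List.nodup_cons.mp hl).1
    have htn : t.Nodup := (List.nodup_cons.mp hl).2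
    rw [List.map_cons, List.prod_cons, Module.End.mul_apply, ih _ _ htn]
    rw [pderiv_pow_monomial]
    have hSt : ((t.map fun i => Finsupp.single i (γ i)).sum) i = 0 := by
      rw [← Finsupp.applyAddHom_apply, map_list_sum]
      rw [List.map_map]
      apply List.sum_eq_zero
      intro x hx
      obtain ⟨j, hj, rfl⟩ := List.mem_map.mp hx
      simp only [Function.comp_apply, Finsupp.applyAddHom_apply]
      rw [Finsupp.single_apply, if_neg]
      rintro rfl; exact hit hj
    congr 1
    · rw [← tsub_add_eq_tsub_tsub, List.map_cons, List.sum_cons, add_comm]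
    · rw [List.map_cons, List.prod_cons, Finsupp.tsub_apply, hSt, Nat.sub_zero]
      ring

lemma pdOp_monomial (γ β : Fin n →₀ ℕ) (a : K) :
    pdOp γ (monomial β a)
      = monomial (β - γ) (a * ((∏ i, (β i).descFactorial (γ i) : ℕ) : K)) := by
  rw [pdOp, list_pd_monomial γ β a _ (List.nodup_finRange n)]
  congr 1
  · congr 1
    rw [← Fin.sum_univ_def]
    congr 1
    ext j
    rw [Finsupp.finset_sum_apply]
    simp [Finsupp.single_apply]
  · rw [Nat.cast_prod, ← Fin.prod_univ_def]

lemma pdOp_monomial_self (γ : Fin n →₀ ℕ) :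
    pdOp γ (monomial γ (1:K)) = C ((∏ i, (γ i).factorial : ℕ) : K) := by
  rw [pdOp_monomial, tsub_self, one_mul]
  simp [Nat.descFactorial_self]

lemma pdOp_monomial_of_not_le {γ β : Fin n →₀ ℕ} (h : ¬ γ ≤ β) :
    pdOp γ (monomial β (1:K)) = 0 := by
  rw [pdOp_monomial]
  obtain ⟨i, hi⟩ : ∃ i, β i < γ i := by
    by_contra hc
    push_neg at hc
    exact h fun i => hc i
  have : (∏ i, (β i).descFactorial (γ i)) = 0 :=
    Finset.prod_eq_zero (Finset.mem_univ i) (Nat.descFactorial_eq_zero_iff_lt.mpr hi)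
  rw [this]
  simp

end Deriv

/-- The action on the polynomial `f` of local differential operators at `m`
(finitely supported coefficient functions `c` with values in the residue field `R α m`):
`c ↦ Σ_α c(α) · π(∂^α f)`, as a linear map over `R ⧸ m`. -/
noncomputable def diffApply {K : Type*} [Field K] {n : ℕ}
    (m : Ideal (MvPolynomial (Fin n) K)) (f : MvPolynomial (Fin n) K) :
    ((Fin n →₀ ℕ) →₀ (MvPolynomial (Fin n) K ⧸ m)) →ₗ[MvPolynomial (Fin n) K ⧸ m]
      (MvPolynomial (Fin n) K ⧸ m) :=
  Finsupp.linearCombination _ fun α => Ideal.Quotient.mk m (pdOp α f)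

/-- The local dual space `D_m[I]` of the ideal `I` at the maximal ideal `m`:
all local differential operators at `m` annihilating every element of `I`. -/
noncomputable def dualSpace {K : Type*} [Field K] {n : ℕ}
    (I m : Ideal (MvPolynomial (Fin n) K)) :
    Submodule (MvPolynomial (Fin n) K ⧸ m) ((Fin n →₀ ℕ) →₀ (MvPolynomial (Fin n) K ⧸ m)) :=
  ⨅ f ∈ I, LinearMap.ker (diffApply m f)

section Inj
variable {K : Type*} [Field K] [CharZero K] {n : ℕ}

lemma diffApply_injective (m : Ideal (MvPolynomial (Fin n) K)) [m.IsMaximal]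
    (c : (Fin n →₀ ℕ) →₀ (MvPolynomial (Fin n) K ⧸ m))
    (h : ∀ f, diffApply m f c = 0) : c = 0 := by
  have key : ∀ d : ℕ, ∀ γ : Fin n →₀ ℕ, (∑ i, γ i) < d → c γ = 0 := by
    intro d
    induction d with
    | zero => exact fun γ h => absurd h (Nat.not_lt_zero _)
    | succ d ih =>
      intro γ hγ
      rcases Nat.lt_or_ge (∑ i, γ i) d with hlt | hge
      · exact ih γ hlt
      have hdeg : (∑ i, γ i) = d := le_antisymm (Nat.lt_succ_iff.mp hγ) hge
      by_cases hmem : γ ∈ c.support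
      swap
      · exact Finsupp.notMem_support_iff.mp hmem
      have h0 := h (monomial γ 1)
      rw [diffApply, Finsupp.linearCombination_apply, Finsupp.sum] at h0
      rw [Finset.sum_eq_single_of_mem γ hmem] at h0
      · rw [pdOp_monomial_self] at h0
        have hC : (Ideal.Quotient.mk m) (C ((∏ i, (γ i).factorial : ℕ) : K)) ≠ 0 := by
          have : (Ideal.Quotient.mk m) (C ((∏ i, (γ i).factorial : ℕ) : K))
              = algebraMap K (MvPolynomial (Fin n) K ⧸ m) ((∏ i, (γ i).factorial : ℕ) : K) := by
            rw [IsScalarTower.algebraMap_apply K (MvPolynomial (Fin n) K)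
              (MvPolynomial (Fin n) K ⧸ m)]
            rfl
          rw [this, map_ne_zero_iff _ (algebraMap K (MvPolynomial (Fin n) K ⧸ m)).injective]
          exact Nat.cast_ne_zero.mpr (Finset.prod_ne_zero_iff.mpr
            fun i _ => Nat.factorial_ne_zero _)
        rw [smul_eq_mul, mul_eq_zero] at h0
        exact h0.resolve_right hC
      · intro b hb hbne
        by_cases hle : b ≤ γ
        · have : (∑ i, b i) < d := by
            obtain ⟨i, hi⟩ : ∃ i, b i < γ i := by
              by_contra hc
              push_neg at hc
              exact hbne (le_antisymm hle fun i => hc i)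
            calc (∑ i, b i) < ∑ i, γ i :=
              Finset.sum_lt_sum (fun i _ => hle i) ⟨i, Finset.mem_univ i, hi⟩
            _ = d := hdeg
          rw [ih b this, smul_eq_mul, zero_mul]
        · rw [pdOp_monomial_of_not_le hle, map_zero, smul_zero]
  ext γ
  exact key ((∑ i, γ i) + 1) γ (Nat.lt_succ_self _)

end Inj

section Fin1
variable {K : Type*} [Field K] {n : ℕ}

/-- generic: finite submodule + finite quotient ⇒ finite module -/
lemma finite_of_sub_quot {M : Type*} [AddCommGroup M] [Module K M] (S : Submodule K M)
    (h1 : Module.Finite K S) (h2 : Module.Finite K (M ⧸ S)) : Module.Finite K M := by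
  rw [Module.finite_def] at *
  have := Submodule.fg_of_fg_map_of_fg_inf_ker S.mkQ (s := ⊤)
    (by rwa [Submodule.map_top, Submodule.range_mkQ])
    (by rw [Submodule.ker_mkQ, top_inf_eq, ← Submodule.fg_top]; exact h1)
  exact this

lemma finite_residue (m : Ideal (MvPolynomial (Fin n) K)) [m.IsMaximal] :
    Module.Finite K (MvPolynomial (Fin n) K ⧸ m) := by
  have hft : Algebra.FiniteType K (MvPolynomial (Fin n) K) := inferInstance
  have : Algebra.FiniteType K (MvPolynomial (Fin n) K ⧸ m) :=
    Algebra.FiniteType.of_surjective (Ideal.Quotient.mkₐ K m)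
      (Ideal.Quotient.mkₐ_surjective K m)
  letI : Field (MvPolynomial (Fin n) K ⧸ m) := Ideal.Quotient.field m
  exact finite_of_finite_type_of_isJacobsonRing K (MvPolynomial (Fin n) K ⧸ m)

end Fin1

section Fin2
open Pointwise
variable {K : Type*} [Field K] {n : ℕ}

lemma finite_quot_pow (m : Ideal (MvPolynomial (Fin n) K)) [m.IsMaximal] (N : ℕ) :
    Module.Finite K (MvPolynomial (Fin n) K ⧸ (m ^ N).restrictScalars K) := by
  -- a finite set E of polynomials spanning the residue field over K
  have hfr := finite_residue m
  obtain ⟨s, hs⟩ := Module.finite_def.mp hfr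
  set e : (MvPolynomial (Fin n) K ⧸ m) → MvPolynomial (Fin n) K :=
    Function.surjInv Ideal.Quotient.mk_surjective with he
  set E : Set (MvPolynomial (Fin n) K) := e '' ↑s with hE
  have hEfin : E.Finite := s.finite_toSet.image _
  have hmkE : (Ideal.Quotient.mk m) '' E = ↑s := by
    rw [hE, Set.image_image]
    have : ∀ x : MvPolynomial (Fin n) K ⧸ m, (Ideal.Quotient.mk m) (e x) = x :=
      Function.surjInv_eq Ideal.Quotient.mk_surjective
    simp [this]
  have claim1 : ∀ f : MvPolynomial (Fin n) K,
      f ∈ Submodule.span K E ⊔ m.restrictScalars K := by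
    intro f
    have hπ : (Ideal.Quotient.mk m) f ∈
        Submodule.map (Ideal.Quotient.mkₐ K m).toLinearMap (Submodule.span K E) := by
      rw [Submodule.map_span]
      have : ⇑(Ideal.Quotient.mkₐ K m).toLinearMap = ⇑(Ideal.Quotient.mk m) := rfl
      rw [this, hmkE, hs]
      exact Submodule.mem_top
    obtain ⟨g, hg, hgf⟩ := hπ
    have hfg : f - g ∈ m := by
      rw [← Ideal.Quotient.eq]
      exact hgf.symm
    have : f = g + (f - g) := by ring
    rw [this]
    exact add_mem (Submodule.mem_sup_left hg) (Submodule.mem_sup_right hfg)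
  induction N with
  | zero =>
    have : (m ^ 0).restrictScalars K = ⊤ := by
      rw [pow_zero, Ideal.one_eq_top]; rfl
    rw [this]
    have : Subsingleton (MvPolynomial (Fin n) K ⧸ (⊤ : Submodule K (MvPolynomial (Fin n) K))) :=
      Submodule.Quotient.subsingleton_iff.mpr rfl
    infer_instance
  | succ N ih =>
    set A : Submodule K (MvPolynomial (Fin n) K) := (m ^ (N+1)).restrictScalars K with hA
    set B : Submodule K (MvPolynomial (Fin n) K) := (m ^ N).restrictScalars K with hB
    have hAB : A ≤ B := fun x hx => Ideal.pow_le_pow_right (Nat.le_succ N) hx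
    obtain ⟨G, hG⟩ := IsNoetherian.noetherian (m ^ N)
    set GS : Set (MvPolynomial (Fin n) K) := ↑G with hGS
    set W : Submodule K (MvPolynomial (Fin n) K) :=
      Submodule.span K (E * GS) ⊔ A with hW
    have claim2 : ∀ b ∈ (Submodule.span (MvPolynomial (Fin n) K)
        (↑G : Set (MvPolynomial (Fin n) K))), ∀ f : MvPolynomial (Fin n) K, f * b ∈ W := by
      intro b hb
      refine Submodule.span_induction ?_ ?_ ?_ ?_ hb
      · intro g hg f
        obtain ⟨eE, heE, μ, hμ, hfd⟩ := Submodule.mem_sup.mp (claim1 f)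
        have hgm : g ∈ m ^ N := hG ▸ Submodule.subset_span hg
        have h1 : eE * g ∈ Submodule.span K (E * GS) := by
          refine Submodule.span_induction ?_ ?_ ?_ ?_ heE
          · intro x hx; exact Submodule.subset_span (Set.mul_mem_mul hx hg)
          · rw [zero_mul]; exact zero_mem _
          · intro x y _ _ hx hy; rw [add_mul]; exact add_mem hx hy
          · intro k x _ hx; rw [smul_mul_assoc]; exact Submodule.smul_mem _ _ hx
        have h2 : μ * g ∈ m ^ (N + 1) := by
          rw [pow_succ, mul_comm μ g]
          exact Ideal.mul_mem_mul hgm hμ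
        rw [← hfd, add_mul]
        exact add_mem (Submodule.mem_sup_left h1) (Submodule.mem_sup_right h2)
      · intro f; rw [mul_zero]; exact zero_mem W
      · intro x y _ _ ihx ihy f; rw [mul_add]; exact add_mem (ihx f) (ihy f)
      · intro r x _ ihx f
        rw [smul_eq_mul, show f * (r * x) = (f * r) * x from by ring]
        exact ihx (f * r)
    have hBW : B ≤ W := by
      intro b hb
      have : b ∈ Submodule.span (MvPolynomial (Fin n) K) (↑G : Set (MvPolynomial (Fin n) K)) := by
        rw [hG]; exact hb
      simpa using claim2 b this 1
    set S : Submodule K (MvPolynomial (Fin n) K ⧸ A) := B.map A.mkQ with hS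
    have hSle : S ≤ Submodule.map A.mkQ (Submodule.span K (E * GS)) := by
      rintro x ⟨b, hb, rfl⟩
      obtain ⟨w, hw, a, ha, hwa⟩ := Submodule.mem_sup.mp (hBW hb)
      refine ⟨w, hw, ?_⟩
      rw [← hwa]
      have : A.mkQ a = 0 := by
        rw [Submodule.mkQ_apply, Submodule.Quotient.mk_eq_zero]; exact ha
      rw [map_add, this, add_zero]
    have hfin : FiniteDimensional K (Submodule.map A.mkQ (Submodule.span K (E * GS))) := by
      rw [Submodule.map_span]
      exact FiniteDimensional.span_of_finite K (((hEfin.mul G.finite_toSet)).image _)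
    have h1 : Module.Finite K S := Submodule.finiteDimensional_of_le hSle
    have h2 : Module.Finite K ((MvPolynomial (Fin n) K ⧸ A) ⧸ S) :=
      Module.Finite.equiv (Submodule.quotientQuotientEquivQuotient A B hAB).symm
    exact finite_of_sub_quot S h1 h2

end Fin2

section Main
variable {K : Type*} [Field K] [CharZero K] {n : ℕ}

noncomputable def lmap (m : Ideal (MvPolynomial (Fin n) K)) :
    ((Fin n →₀ ℕ) →₀ (MvPolynomial (Fin n) K ⧸ m)) →ₗ[MvPolynomial (Fin n) K ⧸ m]
      (MvPolynomial (Fin n) K →ₗ[K] (MvPolynomial (Fin n) K ⧸ m)) :=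
  Finsupp.linearCombination _ fun α => (Ideal.Quotient.mkₐ K m).toLinearMap ∘ₗ (pdOp α)

lemma lmap_apply (m : Ideal (MvPolynomial (Fin n) K))
    (c : (Fin n →₀ ℕ) →₀ (MvPolynomial (Fin n) K ⧸ m)) (f : MvPolynomial (Fin n) K) :
    lmap m c f = diffApply m f c := by
  simp [lmap, diffApply, Finsupp.linearCombination_apply, Finsupp.sum, LinearMap.sum_apply]

theorem dualSpace_finiteDimensional_of_isPrimary'
    (I m : Ideal (MvPolynomial (Fin n) K)) [m.IsMaximal]
    (hprim : I.IsPrimary) (hrad : I.radical = m) :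
    Module.Finite (MvPolynomial (Fin n) K ⧸ m) (dualSpace I m) := by
  classical
  have hmfg : I.radical.FG := by rw [hrad]; exact IsNoetherian.noetherian m
  obtain ⟨N, hN⟩ := Ideal.exists_radical_pow_le_of_fg I hmfg
  rw [hrad] at hN
  set I' : Submodule K (MvPolynomial (Fin n) K) := I.restrictScalars K with hI'
  have hfinI : Module.Finite K (MvPolynomial (Fin n) K ⧸ I') := by
    have h1 := finite_quot_pow m N
    have hle : (m ^ N).restrictScalars K ≤ I' := fun x hx => hN hx
    exact Module.Finite.of_surjective (Submodule.mapQ _ _ LinearMap.id hle)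
      (fun x => by
        obtain ⟨y, rfl⟩ := Submodule.mkQ_surjective I' x
        exact ⟨Submodule.Quotient.mk y, rfl⟩)
  have hfinTL : Module.Finite (MvPolynomial (Fin n) K ⧸ m)
      ((MvPolynomial (Fin n) K ⧸ I') →ₗ[K] (MvPolynomial (Fin n) K ⧸ m)) :=
    Module.Finite.linearMap _ _ _ _
  have hvan : ∀ c : (Fin n →₀ ℕ) →₀ (MvPolynomial (Fin n) K ⧸ m), c ∈ dualSpace I m →
      I' ≤ LinearMap.ker (lmap m c) := by
    intro c hc f hf
    rw [LinearMap.mem_ker, lmap_apply]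
    rw [dualSpace, Submodule.mem_iInf] at hc
    have := hc f
    rw [Submodule.mem_iInf] at this
    exact LinearMap.mem_ker.mp (this hf)
  let P : ((MvPolynomial (Fin n) K ⧸ I') →ₗ[K] (MvPolynomial (Fin n) K ⧸ m))
      →ₗ[MvPolynomial (Fin n) K ⧸ m] (MvPolynomial (Fin n) K →ₗ[K] (MvPolynomial (Fin n) K ⧸ m)) :=
    { toFun := fun g => g.comp I'.mkQ
      map_add' := fun g h => LinearMap.ext fun x => rfl
      map_smul' := fun a g => LinearMap.ext fun x => rfl }
  let Φ₁ : dualSpace I m →ₗ[MvPolynomial (Fin n) K ⧸ m]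
      (MvPolynomial (Fin n) K →ₗ[K] (MvPolynomial (Fin n) K ⧸ m)) :=
    (lmap m).comp (dualSpace I m).subtype
  have hrange : ∀ c : dualSpace I m, Φ₁ c ∈ LinearMap.range P := by
    intro c
    exact ⟨Submodule.liftQ I' (lmap m c.1) (hvan c.1 c.2), Submodule.liftQ_mkQ _ _ _⟩
  let Φ₀ : dualSpace I m →ₗ[MvPolynomial (Fin n) K ⧸ m] LinearMap.range P :=
    LinearMap.codRestrict (LinearMap.range P) Φ₁ hrange
  have hinj : Function.Injective Φ₀ := by
    intro c d hcd
    have h1 : lmap m c.1 = lmap m d.1 := congrArg Subtype.val hcd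
    have h2 : lmap m (c.1 - d.1) = 0 := by rw [map_sub, h1, sub_self]
    have h3 : c.1 - d.1 = 0 := by
      apply diffApply_injective m
      intro f
      rw [← lmap_apply, h2, LinearMap.zero_apply]
    exact Subtype.ext (sub_eq_zero.mp h3)
  have hfinR : Module.Finite (MvPolynomial (Fin n) K ⧸ m) (LinearMap.range P) := by
    rw [LinearMap.range_eq_map]
    exact Module.Finite.map ⊤ P
  haveI : IsNoetherian (MvPolynomial (Fin n) K ⧸ m) (LinearMap.range P) :=
    isNoetherian_of_isNoetherianRing_of_finite (MvPolynomial (Fin n) K ⧸ m) (LinearMap.range P)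
  exact Module.Finite.of_injective Φ₀ hinj

end Main

/-- If `I` is `m`-primary then the local dual space `D_m[I]` is a finite-dimensional
vector space over the residue field `R ⧸ m` (which is a field since `m` is maximal;
`Module.Finite` over a field is finite-dimensionality). -/
theorem dualSpace_finiteDimensional_of_isPrimary
    {K : Type*} [Field K] [CharZero K] {n : ℕ}
    (I m : Ideal (MvPolynomial (Fin n) K)) [m.IsMaximal]
    (hprim : I.IsPrimary) (hrad : I.radical = m) :
    Module.Finite (MvPolynomial (Fin n) K ⧸ m) (dualSpace I m) :=
  dualSpace_finiteDimensional_of_isPrimary' I m hprim hrad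
end

section
/- Let R be a commutative Noetherian ring (e.g. a polynomial ring over a field of characteristic 0) and I ⊊ R a proper ideal. Then I admits an irredundant primary decomposition I = Q_1 ∩ … ∩ Q_r with the following minimality property: for every other irredundant primary decomposition I = Q'_1 ∩ … ∩ Q'_r with √(Q_i) = √(Q'_i) for i = 1,…,r, one has for all i that nil(Q_i) ≤ nil(Q'_i), and whenever nil(Q_i) = nil(Q'_i) one has Q_i ⊆ Q'_i. Moreover, a decomposition with this property is unique. -/
set_option synthInstance.maxHeartbeats 1000000
set_option maxHeartbeats 1000000

namespace OrtizAux

open Ideal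

variable {R : Type*} [CommRing R] {ι : Type*}

/-- Saturation of an ideal `J` at a prime `P`: elements `x` with `s * x ∈ J` for some `s ∉ P`. -/
def sat (P J : Ideal R) (hP : P.IsPrime) : Ideal R where
  carrier := {x | ∃ s, s ∉ P ∧ s * x ∈ J}
  zero_mem' := ⟨1, by simpa using hP.ne_top ∘ (Ideal.eq_top_iff_one P).mpr, by simp⟩
  add_mem' := by
    rintro x y ⟨s, hs, hsx⟩ ⟨t, ht, hty⟩
    refine ⟨s * t, fun h => (hP.mem_or_mem h).elim hs ht, ?_⟩
    have : s * t * (x + y) = t * (s * x) + s * (t * y) := by ring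
    rw [this]
    exact add_mem (Ideal.mul_mem_left _ _ hsx) (Ideal.mul_mem_left _ _ hty)
  smul_mem' := by
    rintro c x ⟨s, hs, hsx⟩
    refine ⟨s, hs, ?_⟩
    have : s * (c • x) = c * (s * x) := by simp only [smul_eq_mul]; ring
    rw [this]
    exact Ideal.mul_mem_left _ _ hsx

lemma mem_sat {P J : Ideal R} {hP : P.IsPrime} {x : R} :
    x ∈ sat P J hP ↔ ∃ s, s ∉ P ∧ s * x ∈ J := Iff.rfl

lemma le_sat {P J : Ideal R} (hP : P.IsPrime) : J ≤ sat P J hP :=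
  fun x hx => ⟨1, by simpa using hP.ne_top ∘ (Ideal.eq_top_iff_one P).mpr, by simpa using hx⟩

lemma sat_le_of_primary {P J q : Ideal R} (hP : P.IsPrime) (hq : q.IsPrimary)
    (hrad : q.radical = P) (hJq : J ≤ q) : sat P J hP ≤ q := by
  rintro x ⟨s, hs, hsx⟩
  rcases (Ideal.isPrimary_iff.mp hq).2
      (show x * s ∈ q from by rw [mul_comm]; exact hJq hsx) with h | h
  · exact h
  · exact absurd (hrad ▸ h) hs

/-- A primary decomposition of `J` over the index finset `s`, with prescribed radicals `P`. -/
def IsDec (P : ι → Ideal R) (s : Finset ι) (J : Ideal R) (D : ι → Ideal R) : Prop :=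
  (∀ i ∈ s, (D i).IsPrimary) ∧ (∀ i ∈ s, (D i).radical = P i) ∧ J = s.inf D

lemma colon_pow_eq [DecidableEq ι] {P : ι → Ideal R} {s : Finset ι} {J : Ideal R}
    {D : ι → Ideal R} (hD : IsDec P s J D) {m : ι} (hm : m ∈ s)
    (hmax : ∀ j ∈ s, j ≠ m → ¬ P m ≤ P j) {n : ℕ}
    (hle : P m ^ n ≤ D m) :
    (J.colon ((P m ^ n : Ideal R) : Set R)) = (s.erase m).inf D := by
  obtain ⟨hprim, hrad, hJ⟩ := hD
  ext x
  rw [Submodule.mem_colon, Submodule.mem_finsetInf]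
  constructor
  · intro h j hj
    rw [Finset.mem_erase] at hj
    obtain ⟨hjm, hjs⟩ := hj
    obtain ⟨p, hpm, hpj⟩ := SetLike.not_le_iff_exists.mp (hmax j hjs hjm)
    have hx : x * p ^ n ∈ J := by simpa [smul_eq_mul] using h (p ^ n) (Ideal.pow_mem_pow hpm n)
    have hxj : x * p ^ n ∈ D j := by
      rw [hJ] at hx
      exact (Submodule.mem_finsetInf.mp hx) j hjs
    rcases (Ideal.isPrimary_iff.mp (hprim j hjs)).2 hxj with h' | h'
    · exact h'
    · rw [hrad j hjs] at h'
      have hPj : (P j).IsPrime := (hrad j hjs) ▸ Ideal.isPrime_radical (hprim j hjs)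
      exact absurd (hPj.mem_of_pow_mem n h') hpj
  · intro h p hp
    rw [hJ, smul_eq_mul, Submodule.mem_finsetInf]
    intro j hjs
    by_cases hjm : j = m
    · subst hjm
      exact Ideal.mul_mem_left _ _ (hle hp)
    · exact Ideal.mul_mem_right _ _ (h j (Finset.mem_erase.mpr ⟨hjm, hjs⟩))

lemma exists_pow_le_of_isDec [IsNoetherianRing R] {P : ι → Ideal R} {s : Finset ι} {J : Ideal R}
    {D : ι → Ideal R} (hD : IsDec P s J D) {m : ι} (hm : m ∈ s) :
    ∃ n, 0 < n ∧ P m ^ n ≤ D m := by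
  obtain ⟨k, hk⟩ := Ideal.exists_radical_pow_le_of_fg (D m) (IsNoetherian.noetherian _)
  refine ⟨k + 1, Nat.succ_pos _, ?_⟩
  rw [← hD.2.1 m hm]
  exact le_trans (Ideal.pow_le_pow_right (Nat.le_succ k)) hk

/-- Compatibility of primary components (Yao's theorem): any choice of components,
each taken from some decomposition of `J`, again intersects to `J`. -/
lemma compat [DecidableEq ι] [IsNoetherianRing R] {P : ι → Ideal R}
    (hinj : Function.Injective P) (s : Finset ι) :
    ∀ (J : Ideal R) (Q : ι → Ideal R), (∃ D, IsDec P s J D) →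
      (∀ i ∈ s, ∃ D, IsDec P s J D ∧ D i = Q i) → J = s.inf Q := by
  induction s using Finset.strongInductionOn with
  | _ s ih =>
  intro J Q hex hQ
  rcases s.eq_empty_or_nonempty with rfl | hne
  · obtain ⟨D, hD⟩ := hex
    simpa using hD.2.2
  obtain ⟨m, hms', hmax'⟩ := Set.Finite.exists_maximalFor P (↑s) s.finite_toSet
    (by exact_mod_cast hne)
  have hms : m ∈ s := hms'
  have hmax : ∀ j ∈ s, j ≠ m → ¬ P m ≤ P j := fun j hj hjm hle =>
    hjm (hinj (le_antisymm hle (hmax' (Finset.mem_coe.mpr hj) hle))).symm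
  obtain ⟨D₀, hD₀⟩ := hex
  have erase_eq : ∀ D D', IsDec P s J D → IsDec P s J D' →
      (s.erase m).inf D = (s.erase m).inf D' := by
    intro D D' hD hD'
    obtain ⟨n₁, hn₁, hle₁⟩ := exists_pow_le_of_isDec hD hms
    obtain ⟨n₂, hn₂, hle₂⟩ := exists_pow_le_of_isDec hD' hms
    have l1 : P m ^ (n₁ + n₂) ≤ D m :=
      le_trans (Ideal.pow_le_pow_right (Nat.le_add_right _ _)) hle₁
    have l2 : P m ^ (n₁ + n₂) ≤ D' m :=
      le_trans (Ideal.pow_le_pow_right (Nat.le_add_left _ _)) hle₂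
    rw [← colon_pow_eq hD hms hmax l1, ← colon_pow_eq hD' hms hmax l2]
  have hrec : (s.erase m).inf D₀ = (s.erase m).inf Q := by
    apply ih (s.erase m) (Finset.erase_ssubset hms)
    · exact ⟨D₀, fun i hi => hD₀.1 i (Finset.mem_of_mem_erase hi),
        fun i hi => hD₀.2.1 i (Finset.mem_of_mem_erase hi), rfl⟩
    · intro i hi
      obtain ⟨D, hD, hDi⟩ := hQ i (Finset.mem_of_mem_erase hi)
      exact ⟨D, ⟨fun k hk => hD.1 k (Finset.mem_of_mem_erase hk),
        fun k hk => hD.2.1 k (Finset.mem_of_mem_erase hk), erase_eq D₀ D hD₀ hD⟩, hDi⟩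
  obtain ⟨Dm, hDm, hDmm⟩ := hQ m hms
  have key : ∀ (D : ι → Ideal R), s.inf D = D m ⊓ (s.erase m).inf D := by
    intro D
    conv_lhs => rw [← Finset.insert_erase hms]
    rw [Finset.inf_insert]
  calc J = s.inf Dm := hDm.2.2
    _ = Dm m ⊓ (s.erase m).inf Dm := key Dm
    _ = Q m ⊓ (s.erase m).inf D₀ := by rw [hDmm, erase_eq Dm D₀ hDm hD₀]
    _ = Q m ⊓ (s.erase m).inf Q := by rw [hrec]
    _ = s.inf Q := (key Q).symm

lemma exists_uniform_pow (T : Finset ι) (g : ι → Ideal R) (y : R)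
    (h : ∀ j ∈ T, y ∈ (g j).radical) : ∃ k, ∀ j ∈ T, y ^ k ∈ g j := by
  classical
  induction T using Finset.induction_on with
  | empty => exact ⟨1, by simp⟩
  | @insert a T ha IH =>
    obtain ⟨k, hk⟩ := IH (fun j hj => h j (Finset.mem_insert_of_mem hj))
    obtain ⟨k₁, hk₁⟩ := h a (Finset.mem_insert_self a T)
    refine ⟨k + k₁, fun j hj => ?_⟩
    rcases Finset.mem_insert.mp hj with rfl | hj'
    · rw [pow_add]; exact Ideal.mul_mem_left _ _ hk₁
    · rw [pow_add]; exact Ideal.mul_mem_right _ _ (hk j hj')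

end OrtizAux


/-- `nil(Q)`: the least positive integer `k` with `(√Q)^k ⊆ Q`. -/
noncomputable def nilIndex {R : Type*} [CommRing R] (Q : Ideal R) : ℕ :=
  sInf {k : ℕ | 0 < k ∧ Q.radical ^ k ≤ Q}

/-- `I = Q_1 ∩ … ∩ Q_r` is an irredundant primary decomposition: each `Q_i` is primary,
the radicals are pairwise distinct, and no `Q_i` contains the intersection of the
others. -/
def IsIrredundantPrimaryDecomposition {R : Type*} [CommRing R]
    (I : Ideal R) {r : ℕ} (Q : Fin r → Ideal R) : Prop :=
  (∀ i, (Q i).IsPrimary) ∧ I = ⨅ i, Q i ∧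
    (∀ i j, (Q i).radical = (Q j).radical → i = j) ∧
    ∀ i : Fin r, ¬ (⨅ j ∈ ({i}ᶜ : Set (Fin r)), Q j) ≤ Q i

/-- The minimality property of a primary decomposition `Q` of `I`, among all irredundant
primary decompositions `Q'` with matching radicals: componentwise, `nil(Q_i) ≤ nil(Q'_i)`,
and if `nil(Q_i) = nil(Q'_i)` then `Q_i ⊆ Q'_i`. -/
def IsMinimalPrimaryDecomposition {R : Type*} [CommRing R]
    (I : Ideal R) {r : ℕ} (Q : Fin r → Ideal R) : Prop :=
  IsIrredundantPrimaryDecomposition I Q ∧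
    ∀ Q' : Fin r → Ideal R, IsIrredundantPrimaryDecomposition I Q' →
      (∀ i, (Q i).radical = (Q' i).radical) →
      ∀ i, nilIndex (Q i) ≤ nilIndex (Q' i) ∧
        (nilIndex (Q i) = nilIndex (Q' i) → Q i ≤ Q' i)

/-- **Ortiz's theorem.** Every proper ideal of a commutative Noetherian ring admits an
irredundant primary decomposition that is componentwise minimal (first for the nilpotency
index `nil`, then for inclusion) among all irredundant primary decompositions with the
same radicals; moreover such a decomposition is unique. -/
theorem exists_unique_minimal_primary_decomposition
    {R : Type*} [CommRing R] [IsNoetherianRing R] (I : Ideal R) (hI : I ≠ ⊤) :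
    ∃ (r : ℕ) (Q : Fin r → Ideal R),
      IsMinimalPrimaryDecomposition I Q ∧
        ∀ Q' : Fin r → Ideal R, IsMinimalPrimaryDecomposition I Q' →
          (∀ i, (Q i).radical = (Q' i).radical) → Q' = Q := by
  classical
  obtain ⟨t, ht_inf, ht_primary, ht_pairwise, ht_irr⟩ := Ideal.IsLasker.minimal (Submodule.isLasker R R) I
  set r := t.card with hr
  set e := t.equivFin with he
  set Q0 : Fin r → Ideal R := fun i => ((e.symm i : {x // x ∈ t}) : Ideal R) with hQ0
  have hQ0mem : ∀ i, Q0 i ∈ t := fun i => (e.symm i).2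
  have hQ0inj : Function.Injective Q0 := fun i j hij =>
    e.symm.injective (Subtype.ext hij)
  have hQ0surj : ∀ J ∈ t, ∃ i, Q0 i = J := fun J hJ =>
    ⟨e ⟨J, hJ⟩, by simp [hQ0]⟩
  have hQ0primary : ∀ i, (Q0 i).IsPrimary := fun i => ht_primary (hQ0mem i)
  set P : Fin r → Ideal R := fun i => (Q0 i).radical with hPdef
  have hPprime : ∀ i, (P i).IsPrime := fun i => Ideal.isPrime_radical (hQ0primary i)
  have hPinj : Function.Injective P := by
    intro i j hij
    by_contra hne
    exact ht_pairwise (hQ0mem i) (hQ0mem j) (fun h => hne (hQ0inj h)) (by simp only [Submodule.colon_univ]; exact hij)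
  have huniv : ∀ D : Fin r → Ideal R, Finset.univ.inf D = ⨅ i, D i := fun D =>
    le_antisymm (le_iInf fun i => Finset.inf_le (Finset.mem_univ i))
      (Finset.le_inf fun i _ => iInf_le _ i)
  have hIinf : I = ⨅ i, Q0 i := by
    rw [← ht_inf]
    refine le_antisymm (le_iInf fun i => Finset.inf_le (hQ0mem i)) ?_
    refine Finset.le_inf fun J hJ => ?_
    obtain ⟨i, rfl⟩ := hQ0surj J hJ
    exact iInf_le _ i
  have hIle0 : ∀ j, I ≤ Q0 j := fun j => le_trans (le_of_eq hIinf) (iInf_le _ j)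
  set Dcmp : (Fin r → Ideal R) → Prop := fun D =>
    (∀ i, (D i).IsPrimary) ∧ (∀ i, (D i).radical = P i) ∧ I = ⨅ i, D i with hDcmp
  have hDec0 : Dcmp Q0 := ⟨hQ0primary, fun i => rfl, hIinf⟩
  have bridge : ∀ D, Dcmp D → OrtizAux.IsDec P Finset.univ I D := by
    rintro D ⟨h1, h2, h3⟩
    exact ⟨fun i _ => h1 i, fun i _ => h2 i, by rw [huniv]; exact h3⟩
  have hIP : ∀ i, I ≤ P i := fun i => le_trans (hIle0 i) Ideal.le_radical
  set N : Fin r → Set ℕ := fun i => {n | 0 < n ∧ ∃ D, Dcmp D ∧ P i ^ n ≤ D i} with hN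
  have hNne : ∀ i, (N i).Nonempty := by
    intro i
    obtain ⟨k, hk⟩ := Ideal.exists_radical_pow_le_of_fg (Q0 i) (IsNoetherian.noetherian _)
    exact ⟨k + 1, Nat.succ_pos _, Q0, hDec0,
      le_trans (Ideal.pow_le_pow_right (Nat.le_succ k)) hk⟩
  set nn : Fin r → ℕ := fun i => sInf (N i) with hnn
  have hmem : ∀ i, nn i ∈ N i := fun i => Nat.sInf_mem (hNne i)
  set QQ : Fin r → Ideal R := fun i =>
    OrtizAux.sat (P i) (I ⊔ P i ^ nn i) (hPprime i) with hQQdef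
  have f1 : ∀ i, I ≤ QQ i := fun i => le_trans le_sup_left (OrtizAux.le_sat _)
  have f2 : ∀ i, P i ^ nn i ≤ QQ i := fun i => le_trans le_sup_right (OrtizAux.le_sat _)
  have hsub : ∀ i, I ⊔ P i ^ nn i ≤ P i := fun i =>
    sup_le (hIP i) (Ideal.pow_le_self (hmem i).1.ne')
  have f3 : ∀ i, QQ i ≤ P i := by
    rintro i x ⟨s, hs, hsx⟩
    rcases (hPprime i).mem_or_mem (hsub i hsx) with h | h
    · exact absurd h hs
    · exact h
  have f4 : ∀ i, (QQ i).radical = P i := by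
    intro i
    refine le_antisymm ?_ ?_
    · calc (QQ i).radical ≤ (P i).radical := Ideal.radical_mono (f3 i)
        _ = P i := (hPprime i).radical
    · have hrp : (P i ^ nn i).radical = P i := by
        rw [Ideal.radical_pow _ (hmem i).1.ne', (hPprime i).radical]
      calc P i = (P i ^ nn i).radical := hrp.symm
        _ ≤ (QQ i).radical := Ideal.radical_mono (f2 i)
  have f5 : ∀ i, (QQ i).IsPrimary := by
    intro i
    rw [Ideal.isPrimary_iff]
    constructor
    · intro htop
      have h1 : (1 : R) ∈ QQ i := htop ▸ Submodule.mem_top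
      obtain ⟨s, hs, hsx⟩ := h1
      rw [mul_one] at hsx
      exact hs (hsub i hsx)
    · intro x y hxy
      by_cases hy : y ∈ P i
      · right; rw [f4 i]; exact hy
      · left
        obtain ⟨s, hs, hsx⟩ := hxy
        refine ⟨s * y, fun h => ((hPprime i).mem_or_mem h).elim hs hy, ?_⟩
        have : s * y * x = s * (x * y) := by ring
        rw [this]
        exact hsx
  have f6 : ∀ i (D : Fin r → Ideal R), Dcmp D → P i ^ nn i ≤ D i →
      Dcmp (Function.update D i (QQ i)) := by
    intro i D hD hle
    obtain ⟨h1, h2, h3⟩ := hD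
    have hIleD : ∀ j, I ≤ D j := fun j => le_trans (le_of_eq h3) (iInf_le _ j)
    refine ⟨?_, ?_, ?_⟩
    · intro j
      by_cases hj : j = i
      · subst hj; simpa [Function.update_self] using f5 j
      · simpa [Function.update_of_ne hj] using h1 j
    · intro j
      by_cases hj : j = i
      · subst hj; simpa [Function.update_self] using f4 j
      · simpa [Function.update_of_ne hj] using h2 j
    · refine le_antisymm (le_iInf fun j => ?_) (fun x hx => ?_)
      · by_cases hj : j = i
        · subst hj; rw [Function.update_self]; exact f1 j
        · rw [Function.update_of_ne hj]; exact hIleD j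
      · have hxQ : x ∈ QQ i := by
          have := (Submodule.mem_iInf _).mp hx i
          rwa [Function.update_self] at this
        have hxD : ∀ j, j ≠ i → x ∈ D j := fun j hj => by
          have := (Submodule.mem_iInf _).mp hx j
          rwa [Function.update_of_ne hj] at this
        obtain ⟨s, hs, hsx⟩ := hxQ
        have hsxI : s * x ∈ I := by
          rw [h3, Submodule.mem_iInf]
          intro j
          by_cases hj : j = i
          · subst hj; exact (sup_le (hIleD j) hle) hsx
          · exact Ideal.mul_mem_left _ _ (hxD j hj)
        have hxDi : x ∈ D i := by
          rcases (Ideal.isPrimary_iff.mp (h1 i)).2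
              (show x * s ∈ D i from by rw [mul_comm]; exact hIleD i hsxI) with h | h
          · exact h
          · rw [h2 i] at h; exact absurd h hs
        rw [h3, Submodule.mem_iInf]
        intro j
        by_cases hj : j = i
        · subst hj; exact hxDi
        · exact hxD j hj
  have f7 : ∀ i, ∃ D, Dcmp D ∧ D i = QQ i := by
    intro i
    obtain ⟨hpos, D, hD, hle⟩ := hmem i
    exact ⟨Function.update D i (QQ i), f6 i D hD hle, Function.update_self i _ D⟩
  have f8inf : I = ⨅ i, QQ i := by
    have := OrtizAux.compat hPinj Finset.univ I QQ ⟨Q0, bridge Q0 hDec0⟩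
      (fun i _ => (f7 i).imp fun D hD => ⟨bridge D hD.1, hD.2⟩)
    rw [huniv] at this; exact this
  have f8 : Dcmp QQ := ⟨f5, f4, f8inf⟩
  have hnilmem : ∀ q : Ideal R, 0 < nilIndex q ∧ q.radical ^ nilIndex q ≤ q := by
    intro q
    have hne : {k : ℕ | 0 < k ∧ q.radical ^ k ≤ q}.Nonempty := by
      obtain ⟨k, hk⟩ := Ideal.exists_radical_pow_le_of_fg q (IsNoetherian.noetherian _)
      exact ⟨k + 1, Nat.succ_pos _, le_trans (Ideal.pow_le_pow_right (Nat.le_succ k)) hk⟩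
    exact Nat.sInf_mem hne
  have f9 : ∀ i, nilIndex (QQ i) = nn i := by
    intro i
    refine le_antisymm (Nat.sInf_le ⟨(hmem i).1, by rw [f4 i]; exact f2 i⟩) ?_
    obtain ⟨hpos, hle⟩ := hnilmem (QQ i)
    rw [f4 i] at hle
    exact Nat.sInf_le ⟨hpos, QQ, f8, hle⟩
  have f10 : ∀ (Q' : Fin r → Ideal R), Dcmp Q' → ∀ i,
      nn i ≤ nilIndex (Q' i) ∧ P i ^ nilIndex (Q' i) ≤ Q' i := by
    intro Q' hQ' i
    obtain ⟨hpos, hle⟩ := hnilmem (Q' i)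
    rw [hQ'.2.1 i] at hle
    exact ⟨Nat.sInf_le ⟨hpos, Q', hQ', hle⟩, hle⟩
  have split : ∀ (D : Fin r → Ideal R) (i : Fin r) (x : R),
      x ∈ (⨅ j ∈ ({i}ᶜ : Set (Fin r)), D j) ↔ ∀ j, j ≠ i → x ∈ D j := by
    intro D i x
    simp only [Submodule.mem_iInf, Set.mem_compl_iff, Set.mem_singleton_iff]
  have f12 : ∀ i, ¬ (⨅ j ∈ ({i}ᶜ : Set (Fin r)), QQ j) ≤ QQ i := by
    intro i hle
    obtain ⟨x, hx_in, hx_nin⟩ := SetLike.not_le_iff_exists.mp (ht_irr (hQ0mem i))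
    have hxj : ∀ j, j ≠ i → x ∈ Q0 j := by
      intro j hj
      have hmem' : Q0 j ∈ t.erase (Q0 i) :=
        Finset.mem_erase.mpr ⟨fun h => hj (hQ0inj h), hQ0mem j⟩
      have hle' : (t.erase (Q0 i)).inf id ≤ Q0 j := Finset.inf_le hmem'
      exact hle' hx_in
    set C := I.colon (Ideal.span {x}) with hC
    have hmemC : ∀ y : R, y ∈ C ↔ y * x ∈ I := fun y => Ideal.mem_colon_span_singleton
    have hCrad_i : C.radical = P i := by
      refine le_antisymm ?_ ?_
      · intro y hy
        obtain ⟨k, hk⟩ := hy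
        rw [hmemC] at hk
        have hx' : x * y ^ k ∈ Q0 i := by rw [mul_comm]; exact hIle0 i hk
        rcases (Ideal.isPrimary_iff.mp (hQ0primary i)).2 hx' with h | h
        · exact absurd h hx_nin
        · exact (hPprime i).mem_of_pow_mem k h
      · have hQ0C : Q0 i ≤ C := by
          intro q hq
          rw [hmemC, hIinf, Submodule.mem_iInf]
          intro j
          by_cases hj : j = i
          · subst hj; exact Ideal.mul_mem_right _ _ hq
          · exact Ideal.mul_mem_left _ _ (hxj j hj)
        exact Ideal.radical_mono hQ0C
    have hKI : I = ⨅ j ∈ ({i}ᶜ : Set (Fin r)), QQ j := by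
      refine le_antisymm (le_iInf fun j => le_iInf fun _ => f1 j) ?_
      intro z hz
      have hzi : z ∈ QQ i := hle hz
      have hzj := (split QQ i z).mp hz
      rw [f8inf, Submodule.mem_iInf]
      intro j
      by_cases hj : j = i
      · subst hj; exact hzi
      · exact hzj j hj
    set T : Finset (Fin r) := Finset.univ.filter (fun j => j ≠ i ∧ x ∉ QQ j) with hT
    have hTy : ∀ j, j ∈ T ↔ (j ≠ i ∧ x ∉ QQ j) := by intro j; simp [hT]
    have hTne : T.Nonempty := by
      rw [Finset.nonempty_iff_ne_empty]
      intro h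
      have hxI : x ∈ I := by
        rw [hKI]
        refine (split QQ i x).mpr fun j hj => ?_
        by_contra hx'
        exact (Finset.eq_empty_iff_forall_notMem.mp h j) ((hTy j).mpr ⟨hj, hx'⟩)
      exact hx_nin (hIle0 i hxI)
    have hCrad_le : ∀ j ∈ T, C.radical ≤ P j := by
      intro j hj y hy
      obtain ⟨hji, hxQQ⟩ := (hTy j).mp hj
      obtain ⟨k, hk⟩ := hy
      rw [hmemC] at hk
      have hx' : x * y ^ k ∈ QQ j := by rw [mul_comm]; exact f1 j hk
      rcases (Ideal.isPrimary_iff.mp (f5 j)).2 hx' with h | h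
      · exact absurd h hxQQ
      · rw [f4 j] at h; exact (hPprime j).mem_of_pow_mem k h
    have hTinf : T.inf P ≤ C.radical := by
      intro y hy
      have hy' : ∀ j ∈ T, y ∈ P j := fun j hj => by
        have h' : T.inf P ≤ P j := Finset.inf_le hj
        exact h' hy
      obtain ⟨k, hk⟩ := OrtizAux.exists_uniform_pow T QQ y
        (fun j hj => by rw [f4 j]; exact hy' j hj)
      refine ⟨k, ?_⟩
      rw [hmemC, hKI]
      refine (split QQ i (y ^ k * x)).mpr fun j hj => ?_
      by_cases hx' : x ∈ QQ j
      · exact Ideal.mul_mem_left _ _ hx'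
      · exact Ideal.mul_mem_right _ _ (hk j ((hTy j).mpr ⟨hj, hx'⟩))
    obtain ⟨j, hjT, hPj⟩ := ((hPprime i).inf_le').mp (le_trans hTinf (le_of_eq hCrad_i))
    have hPeq : P j = P i := le_antisymm hPj (hCrad_i ▸ hCrad_le j hjT)
    exact ((hTy j).mp hjT).1 (hPinj hPeq)
  have hIrr : IsIrredundantPrimaryDecomposition I QQ :=
    ⟨f5, f8inf, fun i j h => hPinj (by rw [← f4 i, ← f4 j, h]), f12⟩
  have hMin : IsMinimalPrimaryDecomposition I QQ := by
    refine ⟨hIrr, ?_⟩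
    intro Q' hQ' hrad i
    have hDQ' : Dcmp Q' := ⟨hQ'.1, fun j => (hrad j).symm.trans (f4 j), hQ'.2.1⟩
    obtain ⟨h10a, h10b⟩ := f10 Q' hDQ' i
    constructor
    · rw [f9 i]; exact h10a
    · intro heq
      have hnn' : nn i = nilIndex (Q' i) := (f9 i).symm.trans heq
      rw [← hnn'] at h10b
      exact OrtizAux.sat_le_of_primary (hPprime i) (hQ'.1 i)
        ((hrad i).symm.trans (f4 i))
        (sup_le (le_trans (le_of_eq hQ'.2.1) (iInf_le _ i)) h10b)
  refine ⟨r, QQ, hMin, ?_⟩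
  intro Q' hQ'min hrad
  funext i
  have h1 := hMin.2 Q' hQ'min.1 hrad i
  have h2 := hQ'min.2 QQ hIrr (fun j => (hrad j).symm) i
  have heq : nilIndex (QQ i) = nilIndex (Q' i) := le_antisymm h1.1 h2.1
  exact le_antisymm (h2.2 heq.symm) (h1.2 heq)
end

section
/- Let K be a field of characteristic 0, R = K[x_1,…,x_n], and p ⊆ R a prime ideal. Let T be a subset of the variable index set {1,…,n} such that the images of the variables x_i (i ∈ T) in the integral domain R/p are algebraically independent over K, and R/p is algebraic over the K-subalgebra generated by these images. Let S ⊆ R be the multiplicative set consisting of nonzero polynomials involving only the variables x_i with i ∈ T. Then S ∩ p = ∅, and the extension p·S⁻¹R of p to the localization S⁻¹R is a maximal ideal of S⁻¹R. -/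
set_option synthInstance.maxHeartbeats 1000000
set_option maxHeartbeats 1000000

open MvPolynomial

/-- The multiplicative set `S` of nonzero polynomials involving only the variables
`x_i` with `i ∈ T`. -/
noncomputable def freeVarsSubmonoid (K : Type*) [Field K] {n : ℕ} (T : Set (Fin n)) :
    Submonoid (MvPolynomial (Fin n) K) where
  carrier := {f | f ∈ MvPolynomial.supported K T ∧ f ≠ 0}
  one_mem' := ⟨Subalgebra.one_mem _, one_ne_zero⟩
  mul_mem' := fun ha hb => ⟨Subalgebra.mul_mem _ ha.1 hb.1, mul_ne_zero ha.2 hb.2⟩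

/-- If `T` is a set of variable indices whose images in `R ⧸ p` are algebraically
independent over `K` and such that `R ⧸ p` is algebraic over the subalgebra they
generate, then the multiplicative set `S` of nonzero polynomials in the variables `x_i`
(`i ∈ T`) is disjoint from `p`, and the extension of `p` to the localization `S⁻¹R` is a
maximal ideal. -/
theorem extension_to_localization_at_free_variables_isMaximal
    {K : Type*} [Field K] [CharZero K] {n : ℕ}
    (p : Ideal (MvPolynomial (Fin n) K)) [p.IsPrime] (T : Set (Fin n))
    (hind : AlgebraicIndependent K
      fun i : T => Ideal.Quotient.mk p (X (i : Fin n)))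
    (halg : Algebra.IsAlgebraic
      ↥(Algebra.adjoin K (Set.range fun i : T => Ideal.Quotient.mk p (X (i : Fin n))))
      (MvPolynomial (Fin n) K ⧸ p)) :
    (∀ s ∈ freeVarsSubmonoid K T, s ∉ p) ∧
      (Ideal.map (algebraMap (MvPolynomial (Fin n) K)
          (Localization (freeVarsSubmonoid K T))) p).IsMaximal := by
  set R := MvPolynomial (Fin n) K
  set fam : T → R ⧸ p := fun i : T => Ideal.Quotient.mk p (X (i : Fin n)) with hfam
  -- the quotient map, seen on renamed polynomials, is `aeval fam`
  have key : ∀ q : MvPolynomial T K,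
      Ideal.Quotient.mk p (rename (Subtype.val) q) = aeval fam q := by
    intro q
    have h1 : ((Ideal.Quotient.mkₐ K p).comp (rename (Subtype.val : T → Fin n)))
        = aeval fam := by
      rw [aeval_unique (((Ideal.Quotient.mkₐ K p).comp (rename (Subtype.val : T → Fin n))))]
      congr 1
      funext i
      simp [hfam]
    calc Ideal.Quotient.mk p (rename (Subtype.val) q)
        = ((Ideal.Quotient.mkₐ K p).comp (rename (Subtype.val : T → Fin n))) q := rfl
      _ = aeval fam q := by rw [h1]
  have hinj : Function.Injective (aeval fam : MvPolynomial T K →ₐ[K] R ⧸ p) :=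
    algebraicIndependent_iff_injective_aeval.mp hind
  -- Part 1: S ∩ p = ∅
  have part1 : ∀ s ∈ freeVarsSubmonoid K T, s ∉ p := by
    intro s hs hsp
    obtain ⟨hsup, hs0⟩ := hs
    rw [supported_eq_range_rename] at hsup
    obtain ⟨q, hq⟩ := hsup
    have hq' : rename (Subtype.val) q = s := hq
    apply hs0
    have h0 : aeval fam q = 0 := by
      rw [← key, hq', Ideal.Quotient.eq_zero_iff_mem]; exact hsp
    have hq0 : q = 0 := hinj (by simpa using h0)
    rw [← hq', hq0, map_zero]
  refine ⟨part1, ?_⟩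
  -- notation
  set S := freeVarsSubmonoid K T
  set Loc := Localization S
  set J := Ideal.map (algebraMap R Loc) p with hJ
  -- every element of the adjoined subalgebra lifts to a supported polynomial
  have hsup : ∀ a : R ⧸ p, a ∈ Algebra.adjoin K (Set.range fam) →
      ∃ s : R, s ∈ MvPolynomial.supported K T ∧ Ideal.Quotient.mk p s = a := by
    intro a ha
    rw [Algebra.adjoin_range_eq_range_aeval] at ha
    obtain ⟨q, hq⟩ := ha
    refine ⟨rename (Subtype.val) q, ?_, ?_⟩
    · rw [supported_eq_range_rename]; exact ⟨q, rfl⟩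
    · rw [key]; exact hq
  -- the composite ring hom R⧸p → Loc⧸J
  have hkill : ∀ r ∈ p,
      (Ideal.Quotient.mk J).comp (algebraMap R Loc) r = 0 := by
    intro r hr
    simp only [RingHom.comp_apply, Ideal.Quotient.eq_zero_iff_mem, hJ]
    exact Ideal.mem_map_of_mem _ hr
  set ψ : (R ⧸ p) →+* (Loc ⧸ J) :=
    Ideal.Quotient.lift p ((Ideal.Quotient.mk J).comp (algebraMap R Loc)) hkill with hψ
  have hψmk : ∀ r : R, ψ (Ideal.Quotient.mk p r)
      = Ideal.Quotient.mk J (algebraMap R Loc r) := fun r => rfl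
  -- units of the localization coming from S
  have hunit : ∀ s : R, s ∈ S → IsUnit (Ideal.Quotient.mk J (algebraMap R Loc s)) := by
    intro s hs
    exact (IsLocalization.map_units Loc (⟨s, hs⟩ : S)).map (Ideal.Quotient.mk J)
  -- nonzero elements of R⧸p become units in Loc⧸J
  have hψunit : ∀ d : R ⧸ p, d ≠ 0 → IsUnit (ψ d) := by
    intro d hd
    have hdnz : d ∈ nonZeroDivisors (R ⧸ p) :=
      mem_nonZeroDivisors_of_ne_zero hd
    obtain ⟨a, ha0, hdvd⟩ :=
      (halg.isAlgebraic d).exists_nonzero_dvd hdnz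
    obtain ⟨e, he⟩ := hdvd
    have haD : (algebraMap _ (R ⧸ p) a) ≠ 0 := by
      intro h
      apply ha0
      apply Subtype.ext
      simpa using h
    obtain ⟨s, hsupp, hmk⟩ := hsup (algebraMap _ (R ⧸ p) a) a.2
    have hs0 : s ≠ 0 := by
      intro h; apply haD; rw [← hmk, h, map_zero]
    have hsS : s ∈ S := ⟨hsupp, hs0⟩
    have : IsUnit (ψ (algebraMap _ (R ⧸ p) a)) := by
      rw [← hmk, hψmk]; exact hunit s hsS
    rw [he, map_mul] at this
    obtain ⟨u, hu⟩ := this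
    have h1 : ψ d * (ψ e * ↑u⁻¹) = 1 := by rw [← mul_assoc, ← hu]; exact u.mul_inv
    exact isUnit_iff_exists.mpr ⟨ψ e * ↑u⁻¹, h1, (mul_comm (ψ e * ↑u⁻¹) (ψ d)).trans h1⟩
  -- J is a proper ideal
  have hdisj : Disjoint (S : Set R) (p : Set R) := by
    rw [Set.disjoint_left]; intro s hs; exact part1 s hs
  have hJprime : J.IsPrime :=
    IsLocalization.isPrime_of_isPrime_disjoint S Loc p inferInstance hdisj
  have hJne : J ≠ ⊤ := hJprime.ne_top
  -- the quotient is a field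
  have hfield : IsField (Loc ⧸ J) := by
    constructor
    · exact (Ideal.Quotient.nontrivial_iff.mpr hJne).exists_pair_ne
    · exact fun a b => mul_comm a b
    · intro z hz
      obtain ⟨y, rfl⟩ := Ideal.Quotient.mk_surjective z
      obtain ⟨⟨r, s⟩, hrs⟩ := IsLocalization.mk'_surjective S y
      dsimp only at hrs; subst hrs
      have hspec : IsLocalization.mk' Loc r s * algebraMap R Loc s = algebraMap R Loc r :=
        IsLocalization.mk'_spec Loc r s
      have hspec' : Ideal.Quotient.mk J (IsLocalization.mk' Loc r s)
          * Ideal.Quotient.mk J (algebraMap R Loc s)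
          = ψ (Ideal.Quotient.mk p r) := by
        rw [hψmk, ← map_mul, hspec]
      have hr0 : Ideal.Quotient.mk p r ≠ 0 := by
        intro h
        apply hz
        have hu := hunit s s.2
        have : Ideal.Quotient.mk J (IsLocalization.mk' Loc r s)
            * Ideal.Quotient.mk J (algebraMap R Loc s) = 0 := by
          rw [hspec', h, map_zero]
        obtain ⟨u, hu'⟩ := hu
        calc Ideal.Quotient.mk J (IsLocalization.mk' Loc r s)
            = Ideal.Quotient.mk J (IsLocalization.mk' Loc r s) * ↑u * ↑u⁻¹ := by
              rw [Units.mul_inv_cancel_right]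
          _ = 0 := by rw [hu', this]; exact zero_mul (↑u⁻¹ : Loc ⧸ J)
      have hu1 := hψunit _ hr0
      have hu2 := hunit s s.2
      obtain ⟨u1, hu1e⟩ := hu1
      obtain ⟨u2, hu2e⟩ := hu2
      refine ⟨(↑u1⁻¹ : Loc ⧸ J) * (↑u2 : Loc ⧸ J), ?_⟩
      have : Ideal.Quotient.mk J (IsLocalization.mk' Loc r s) * (↑u2 : Loc ⧸ J) = ↑u1 := by
        rw [hu2e, hu1e]; exact hspec'
      calc Ideal.Quotient.mk J (IsLocalization.mk' Loc r s) * ((↑u1⁻¹ : Loc ⧸ J) * ↑u2)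
          = (Ideal.Quotient.mk J (IsLocalization.mk' Loc r s) * ↑u2) * ↑u1⁻¹ := by ring
        _ = (↑u1 : Loc ⧸ J) * ↑u1⁻¹ := by rw [this]
        _ = 1 := u1.mul_inv
  exact Ideal.Quotient.maximal_of_isField J hfield
end
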